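/- Every Büchi abstraction is a Wilke algebra: for all 𝒜, ℬ ∈ M_*, 𝒜·(ℬ·𝒜)^ω = (𝒜·ℬ)^ω, and (𝒜ⁿ)^ω = 𝒜^ω for every n > 0, where 𝒜ⁿ is the n-fold product of 𝒜. -/

import Mathlib

/-- Finite or infinite words over `σ`. -/
def FIWord (σ : Type) : Type := List σ ⊕ Stream' σ

/-- Concatenation of a finite word with a finite-or-infinite word. -/
def wcat {σ : Type} (u : List σ) : FIWord σ → FIWord σ
  | Sum.inl v => Sum.inl (u ++ v)
  | Sum.inr s => Sum.inr (u ++ₛ s)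

/-- Elementwise concatenation of two languages of finite words. -/
def lcatF {σ : Type} (U V : Set (List σ)) : Set (List σ) :=
  {w | ∃ u ∈ U, ∃ v ∈ V, w = u ++ v}

/-- Elementwise concatenation of a language of finite words with a language of
finite-or-infinite words. -/
def lcat {σ : Type} (U : Set (List σ)) (V : Set (FIWord σ)) : Set (FIWord σ) :=
  {w | ∃ u ∈ U, ∃ v ∈ V, w = wcat u v}

/-- Kleene star of a language of finite words. -/
def star {σ : Type} (U : Set (List σ)) : Set (List σ) :=
  {w | ∃ L : List (List σ), (∀ u ∈ L, u ∈ U) ∧ w = L.flatten}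

/-- Concatenation `f 0 ++ f 1 ++ ⋯ ++ f (n-1)`. -/
def prefixCat {σ : Type} (f : ℕ → List σ) : ℕ → List σ
  | 0 => []
  | n + 1 => prefixCat f n ++ f n

open Classical in
/-- The finite-or-infinite word `f 0 f 1 f 2 ⋯` obtained by concatenating all
the finite words `f i`. -/
noncomputable def flattenWords {σ : Type} [Inhabited σ] (f : ℕ → List σ) : FIWord σ :=
  if h : ∃ N, ∀ n, N ≤ n → f n = [] then Sum.inl (prefixCat f h.choose)
  else Sum.inr (fun k => (prefixCat f (sInf {n | k < (prefixCat f n).length})).getD k default)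

/-- `U^ω`: the set of countably infinite concatenations of elements of `U`. -/
noncomputable def omegaPow {σ : Type} [Inhabited σ] (U : Set (List σ)) : Set (FIWord σ) :=
  {w | ∃ f : ℕ → List σ, (∀ i, f i ∈ U) ∧ w = flattenWords f}

/-- A Büchi algebra: two join-semilattices with a monotone associative
concatenation on `Mf`, a monotone action of `Mf` on `Mo`, and a monotone
ω-iteration `Mf → Mo`. -/
structure BuchiAlgebra (Mf Mo : Type*) [SemilatticeSup Mf] [SemilatticeSup Mo] where
  cat : Mf → Mf → Mf
  act : Mf → Mo → Mo
  omega : Mf → Mo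
  cat_mono : ∀ {a b c d : Mf}, a ≤ b → c ≤ d → cat a c ≤ cat b d
  act_mono : ∀ {a b : Mf} {u v : Mo}, a ≤ b → u ≤ v → act a u ≤ act b v
  omega_mono : Monotone omega
  cat_assoc : ∀ a b c : Mf, cat a (cat b c) = cat (cat a b) c
  act_assoc : ∀ (a b : Mf) (v : Mo), act a (act b v) = act (cat a b) v

/-- A Büchi abstraction: a finite Büchi algebra equipped with Galois insertions
to the powersets of finite words and of finite-or-infinite words, whose
abstraction functions are compatible with concatenation and ω-iteration. -/
structure BuchiAbstraction (σ : Type) [Inhabited σ] (Mf Mo : Type*)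
    [SemilatticeSup Mf] [SemilatticeSup Mo] [Finite Mf] [Finite Mo]
    extends BuchiAlgebra Mf Mo where
  αf : Set (List σ) → Mf
  γf : Mf → Set (List σ)
  αo : Set (FIWord σ) → Mo
  γo : Mo → Set (FIWord σ)
  gif : GaloisInsertion αf γf
  gio : GaloisInsertion αo γo
  αf_cat : ∀ A B : Set (List σ), αf (lcatF A B) = cat (αf A) (αf B)
  αo_cat : ∀ (A : Set (List σ)) (V : Set (FIWord σ)), αo (lcat A V) = act (αf A) (αo V)
  αo_omega : ∀ A : Set (List σ), αo (omegaPow A) = omega (αf A)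

/-- The `n`-fold product `a^(n+1)` in a Büchi algebra. -/
def BuchiAlgebra.pow {Mf Mo : Type*} [SemilatticeSup Mf] [SemilatticeSup Mo]
    (B : BuchiAlgebra Mf Mo) (a : Mf) : ℕ → Mf
  | 0 => a
  | n + 1 => B.cat a (B.pow a n)

/-! ### Auxiliary machinery -/

section Aux

variable {σ : Type} [Inhabited σ]
set_option linter.unusedSectionVars false

theorem prefixCat_le {f : ℕ → List σ} {m n : ℕ} (h : m ≤ n) :
    prefixCat f m <+: prefixCat f n := by
  induction n with
  | zero => cases Nat.le_zero.mp h; exact List.prefix_refl _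
  | succ n ih =>
    rcases Nat.lt_or_ge m (n + 1) with h' | h'
    · exact (ih (Nat.lt_succ_iff.mp h')).trans ⟨f n, rfl⟩
    · have hmn : m = n + 1 := le_antisymm h h'
      subst hmn; exact List.prefix_refl _

/-- A prefix-sequence `P` "agrees" with a finite-or-infinite word `w`. -/
def Agrees (P : ℕ → List σ) : FIWord σ → Prop
  | Sum.inl v => (∀ n, P n <+: v) ∧ ∃ N, P N = v
  | Sum.inr s => (∀ n k, k < (P n).length → s k = (P n).getD k default) ∧
      ∀ K, ∃ n, K ≤ (P n).length

theorem agrees_inl {P : ℕ → List σ} {v : List σ} :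
    Agrees P (Sum.inl v) ↔ (∀ n, P n <+: v) ∧ ∃ N, P N = v := Iff.rfl

theorem agrees_inr {P : ℕ → List σ} {s : Stream' σ} :
    Agrees P (Sum.inr s) ↔ (∀ n k, k < (P n).length → s k = (P n).getD k default) ∧
      ∀ K, ∃ n, K ≤ (P n).length := Iff.rfl

theorem getD_of_prefix {l l' : List σ} (h : l <+: l') {k : ℕ} (hk : k < l.length) :
    l'.getD k default = l.getD k default := by
  obtain ⟨t, rfl⟩ := h
  exact List.getD_append l t default k hk

theorem prefixCat_eventually_const {f : ℕ → List σ} {N n : ℕ}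
    (hN : ∀ m, N ≤ m → f m = []) (h : N ≤ n) : prefixCat f n = prefixCat f N := by
  induction n with
  | zero => cases Nat.le_zero.mp h; rfl
  | succ n ih =>
    rcases Nat.lt_or_ge N (n + 1) with h' | h'
    · have hn : N ≤ n := Nat.lt_succ_iff.mp h'
      show prefixCat f n ++ f n = _
      rw [hN n hn, List.append_nil, ih hn]
    · have : N = n + 1 := le_antisymm h h'
      rw [this]

theorem agrees_flattenWords (f : ℕ → List σ) : Agrees (prefixCat f) (flattenWords f) := by
  by_cases h : ∃ N, ∀ n, N ≤ n → f n = []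
  · have e : flattenWords f = Sum.inl (prefixCat f h.choose) := dif_pos h
    rw [e, agrees_inl]
    refine ⟨?_, h.choose, rfl⟩
    intro n
    rcases Nat.le_total n h.choose with h' | h'
    · exact prefixCat_le h'
    · rw [prefixCat_eventually_const h.choose_spec h']
  · have e : flattenWords f = (Sum.inr ((fun k => (prefixCat f (sInf {n | k < (prefixCat f n).length})).getD k default : Stream' σ)) : FIWord σ) := dif_neg h
    rw [e]; refine agrees_inr.mpr ?_
    push_neg at h
    have unb : ∀ K, ∃ n, K ≤ (prefixCat f n).length := by
      intro K
      induction K with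
      | zero => exact ⟨0, Nat.zero_le _⟩
      | succ K ih =>
        obtain ⟨n, hn⟩ := ih
        obtain ⟨m, hm, hne⟩ := h n
        refine ⟨m + 1, ?_⟩
        have h1 : (prefixCat f n).length ≤ (prefixCat f m).length :=
          (prefixCat_le hm).length_le
        have h2 : (prefixCat f (m + 1)).length = (prefixCat f m).length + (f m).length := by
          show (prefixCat f m ++ f m).length = _
          simp
        have h3 : 0 < (f m).length := List.length_pos_iff.mpr hne
        omega
    refine ⟨?_, unb⟩
    intro n k hk
    have hne : {m | k < (prefixCat f m).length}.Nonempty := ⟨n, hk⟩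
    have hmem := Nat.sInf_mem hne
    show (prefixCat f (sInf {m | k < (prefixCat f m).length})).getD k default
        = (prefixCat f n).getD k default
    rcases Nat.le_total (sInf {m | k < (prefixCat f m).length}) n with h' | h'
    · exact (getD_of_prefix (prefixCat_le h') hmem).symm
    · exact getD_of_prefix (prefixCat_le h') hk

theorem agrees_unique {P : ℕ → List σ} {w w' : FIWord σ}
    (hw : Agrees P w) (hw' : Agrees P w') : w = w' := by
  match w, w' with
  | Sum.inl v, Sum.inl v' =>
    obtain ⟨hp, N, hN⟩ := hw
    obtain ⟨hp', N', hN'⟩ := hw'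
    have h1 : v <+: v' := hN ▸ hp' N
    have h2 : v' <+: v := hN' ▸ hp N'
    rw [h1.eq_of_length (le_antisymm h1.length_le h2.length_le)]
  | Sum.inl v, Sum.inr s =>
    obtain ⟨hp, -⟩ := hw
    obtain ⟨-, unb⟩ := hw'
    obtain ⟨n, hn⟩ := unb (v.length + 1)
    have := (hp n).length_le
    omega
  | Sum.inr s, Sum.inl v =>
    obtain ⟨-, unb⟩ := hw
    obtain ⟨hp, -⟩ := hw'
    obtain ⟨n, hn⟩ := unb (v.length + 1)
    have := (hp n).length_le
    omega
  | Sum.inr s, Sum.inr s' =>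
    obtain ⟨hs, unb⟩ := hw
    obtain ⟨hs', -⟩ := hw'
    congr 1
    funext k
    obtain ⟨n, hn⟩ := unb (k + 1)
    rw [hs n k hn]
    exact (hs' n k hn).symm

theorem agrees_transfer {P Q : ℕ → List σ} {w : FIWord σ}
    (h1 : ∀ n, ∃ m, P n <+: Q m) (h2 : ∀ m, ∃ n, Q m <+: P n)
    (hw : Agrees P w) : Agrees Q w := by
  match w with
  | Sum.inl v =>
    obtain ⟨hp, N, hN⟩ := hw
    rw [agrees_inl]
    constructor
    · intro m
      obtain ⟨n, hn⟩ := h2 m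
      exact hn.trans (hp n)
    · obtain ⟨m, hm⟩ := h1 N
      obtain ⟨n, hn⟩ := h2 m
      have hQv : Q m <+: v := hn.trans (hp n)
      have hvQ : v <+: Q m := hN ▸ hm
      exact ⟨m, hQv.eq_of_length (le_antisymm hQv.length_le hvQ.length_le)⟩
  | Sum.inr s =>
    obtain ⟨hs, unb⟩ := hw
    rw [agrees_inr]
    constructor
    · intro m k hk
      obtain ⟨n, hn⟩ := h2 m
      have hk' : k < (P n).length := lt_of_lt_of_le hk hn.length_le
      rw [hs n k hk']
      exact getD_of_prefix hn hk
    · intro K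
      obtain ⟨n, hn⟩ := unb K
      obtain ⟨m, hm⟩ := h1 n
      exact ⟨m, le_trans hn hm.length_le⟩

theorem appendStream_get_left (l : List σ) (s : Stream' σ) :
    ∀ k, k < l.length → (l ++ₛ s) k = l.getD k default := by
  induction l with
  | nil => intro k hk; simp at hk
  | cons a l ih =>
    intro k hk
    cases k with
    | zero => rfl
    | succ k =>
      show Stream'.get ((a :: l) ++ₛ s) (k + 1) = _
      rw [Stream'.cons_append_stream, Stream'.get_succ_cons]
      exact ih k (by simpa using hk)

theorem appendStream_get_right (l : List σ) (s : Stream' σ) (k : ℕ) :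
    (l ++ₛ s) (k + l.length) = s k := by
  conv_rhs => rw [← Stream'.drop_append_stream l s]
  rw [Nat.add_comm]
  exact (Stream'.get_drop k l.length (l ++ₛ s)).symm

theorem agrees_wcat {P : ℕ → List σ} {w : FIWord σ} (u : List σ)
    (hw : Agrees P w) : Agrees (fun n => u ++ P n) (wcat u w) := by
  match w with
  | Sum.inl v =>
    obtain ⟨hp, N, hN⟩ := hw
    show Agrees _ (Sum.inl (u ++ v))
    rw [agrees_inl]
    refine ⟨fun n => ?_, N, by rw [hN]⟩
    obtain ⟨t, ht⟩ := hp n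
    exact ⟨t, by rw [List.append_assoc, ht]⟩
  | Sum.inr s =>
    obtain ⟨hs, unb⟩ := hw
    show Agrees _ (Sum.inr (u ++ₛ s))
    rw [agrees_inr]
    constructor
    · intro n k hk
      simp only [List.length_append] at hk
      rcases Nat.lt_or_ge k u.length with hku | hku
      · show (u ++ₛ s) k = (u ++ P n).getD k default
        rw [appendStream_get_left u s k hku, List.getD_append _ _ _ _ hku]
      · show (u ++ₛ s) k = (u ++ P n).getD k default
        have hk2 : k - u.length < (P n).length := by omega
        have h3 := appendStream_get_right u s (k - u.length)
        rw [Nat.sub_add_cancel hku] at h3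
        rw [h3, hs n _ hk2, List.getD_append_right _ _ _ _ hku]
    · intro K
      obtain ⟨n, hn⟩ := unb K
      exact ⟨n, by simp only [List.length_append]; omega⟩

theorem flattenWords_congr {f g : ℕ → List σ}
    (h1 : ∀ n, ∃ m, prefixCat f n <+: prefixCat g m)
    (h2 : ∀ m, ∃ n, prefixCat g m <+: prefixCat f n) :
    flattenWords f = flattenWords g :=
  agrees_unique (agrees_transfer h1 h2 (agrees_flattenWords f)) (agrees_flattenWords g)

theorem flattenWords_eq_wcat {f g : ℕ → List σ} (u : List σ)
    (h1 : ∀ n, ∃ m, u ++ prefixCat f n <+: prefixCat g m)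
    (h2 : ∀ m, ∃ n, prefixCat g m <+: u ++ prefixCat f n) :
    flattenWords g = wcat u (flattenWords f) :=
  agrees_unique (agrees_flattenWords g)
    (agrees_transfer h1 h2 (agrees_wcat u (agrees_flattenWords f)))

/-- The key Wilke identity on languages: `A·(B·A)^ω = (A·B)^ω`. -/
theorem lcat_omegaPow_eq (A B : Set (List σ)) :
    lcat A (omegaPow (lcatF B A)) = omegaPow (lcatF A B) := by
  ext w
  constructor
  · rintro ⟨u, hu, v, hv, rfl⟩
    obtain ⟨f, hf, rfl⟩ := hv
    choose b hb a ha hba using hf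
    set g : ℕ → List σ := fun n => match n with
      | 0 => u ++ b 0
      | n + 1 => a n ++ b (n + 1) with hg
    have key : ∀ n, prefixCat g (n + 1) = (u ++ prefixCat f n) ++ b n := by
      intro n
      induction n with
      | zero => show prefixCat g 0 ++ g 0 = _; simp [hg, prefixCat]
      | succ n ih =>
        show prefixCat g (n + 1) ++ g (n + 1) = _
        rw [ih]
        show ((u ++ prefixCat f n) ++ b n) ++ (a n ++ b (n + 1)) = _
        have : prefixCat f (n + 1) = prefixCat f n ++ (b n ++ a n) := by
          show prefixCat f n ++ f n = _; rw [hba n]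
        rw [this]
        simp [List.append_assoc]
    refine ⟨g, ?_, ?_⟩
    · intro n
      match n with
      | 0 => exact ⟨u, hu, b 0, hb 0, rfl⟩
      | n + 1 => exact ⟨a n, ha n, b (n + 1), hb (n + 1), rfl⟩
    · refine (flattenWords_eq_wcat u ?_ ?_).symm
      · intro n
        exact ⟨n + 1, ⟨b n, (key n).symm⟩⟩
      · intro m
        match m with
        | 0 => exact ⟨0, List.nil_prefix⟩
        | m + 1 =>
          refine ⟨m + 1, ⟨a m, ?_⟩⟩
          rw [key m]
          have : prefixCat f (m + 1) = prefixCat f m ++ (b m ++ a m) := by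
            show prefixCat f m ++ f m = _; rw [hba m]
          rw [this]
          simp [List.append_assoc]
  · rintro ⟨f, hf, rfl⟩
    choose a ha b hb hab using hf
    set g : ℕ → List σ := fun n => b n ++ a (n + 1) with hg
    have key : ∀ n, a 0 ++ prefixCat g n = prefixCat f n ++ a n := by
      intro n
      induction n with
      | zero => simp [prefixCat]
      | succ n ih =>
        show a 0 ++ (prefixCat g n ++ g n) = prefixCat f n ++ f n ++ a (n + 1)
        rw [← List.append_assoc, ih, hab n, hg]
        simp [List.append_assoc]
    refine ⟨a 0, ha 0, flattenWords g,
      ⟨g, fun n => ⟨b n, hb n, a (n + 1), ha (n + 1), rfl⟩, rfl⟩, ?_⟩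
    refine (flattenWords_eq_wcat (a 0) ?_ ?_).symm.symm
    · intro n
      refine ⟨n + 1, ⟨b n, ?_⟩⟩
      rw [key n]
      show prefixCat f n ++ a n ++ b n = prefixCat f n ++ f n
      rw [hab n, List.append_assoc]
    · intro m
      exact ⟨m, ⟨a m, (key m).symm⟩⟩

/-- Language-level powers: `powL A n = A^(n+1)`. -/
def powL (A : Set (List σ)) : ℕ → Set (List σ)
  | 0 => A
  | n + 1 => lcatF A (powL A n)

theorem flatten_mem_powL {A : Set (List σ)} (n : ℕ) :
    ∀ L : List (List σ), L.length = n + 1 → (∀ u ∈ L, u ∈ A) → L.flatten ∈ powL A n := by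
  induction n with
  | zero =>
    rintro (- | ⟨u, L⟩) h hA
    · simp at h
    · have : L = [] := by simpa using h
      subst this
      simpa [powL] using hA u (by simp)
  | succ n ih =>
    rintro (- | ⟨u, L⟩) h hA
    · simp at h
    · exact ⟨u, hA u (by simp), L.flatten,
        ih L (by simpa using h) (fun v hv => hA v (by simp [hv])), by simp⟩

theorem exists_list_of_mem_powL {A : Set (List σ)} :
    ∀ {n : ℕ} {w : List σ}, w ∈ powL A n →
      ∃ L : List (List σ), L.length = n + 1 ∧ (∀ u ∈ L, u ∈ A) ∧ w = L.flatten := by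
  intro n
  induction n with
  | zero =>
    intro w hw
    refine ⟨[w], rfl, ?_, by simp⟩
    intro u hu
    simp at hu
    subst hu
    exact hw
  | succ n ih =>
    rintro w ⟨u, hu, v, hv, rfl⟩
    obtain ⟨L, hL1, hL2, rfl⟩ := ih hv
    refine ⟨u :: L, by simp [hL1], ?_, by simp⟩
    intro x hx
    rcases List.mem_cons.mp hx with rfl | hx
    · exact hu
    · exact hL2 x hx

theorem prefixCat_add (f : ℕ → List σ) (s k : ℕ) :
    prefixCat f (s + k) = prefixCat f s ++ ((List.range k).map fun j => f (s + j)).flatten := by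
  induction k with
  | zero => simp [prefixCat]
  | succ k ih =>
    show prefixCat f (s + k) ++ f (s + k) = _
    rw [ih, List.range_succ, List.map_append, List.flatten_append]
    simp [List.append_assoc]

theorem omegaPow_powL (A : Set (List σ)) (n : ℕ) : omegaPow (powL A n) = omegaPow A := by
  ext w
  constructor
  · rintro ⟨f, hf, rfl⟩
    choose L hL1 hL2 hL3 using fun i => exists_list_of_mem_powL (hf i)
    set g : ℕ → List σ := fun k => (L (k / (n + 1))).getD (k % (n + 1)) [] with hgdef
    have hg : ∀ k, g k ∈ A := by
      intro k
      have hk : k % (n + 1) < (L (k / (n + 1))).length := by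
        rw [hL1]; exact Nat.mod_lt _ (Nat.succ_pos n)
      show (L (k / (n + 1))).getD (k % (n + 1)) [] ∈ A
      rw [List.getD_eq_getElem _ _ hk]
      exact hL2 _ _ (List.getElem_mem hk)
    have hblock : ∀ m, (List.range (n + 1)).map (fun j => g ((n + 1) * m + j)) = L m := by
      intro m
      refine List.ext_getElem (by simp [hL1]) ?_
      intro i h1 h2
      simp only [List.getElem_map, List.getElem_range]
      have hi : i < n + 1 := by simpa using h1
      show (L (((n + 1) * m + i) / (n + 1))).getD (((n + 1) * m + i) % (n + 1)) [] = (L m)[i]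
      have hdiv : ((n + 1) * m + i) / (n + 1) = m := by
        rw [Nat.mul_add_div (Nat.succ_pos n), Nat.div_eq_of_lt hi, Nat.add_zero]
      have hmod : ((n + 1) * m + i) % (n + 1) = i := by
        rw [Nat.mul_add_mod, Nat.mod_eq_of_lt hi]
      rw [hdiv, hmod]
      exact List.getD_eq_getElem _ _ (by rw [hL1]; exact hi)
    have hpre : ∀ m, prefixCat g ((n + 1) * m) = prefixCat f m := by
      intro m
      induction m with
      | zero => rw [Nat.mul_zero]; rfl
      | succ m ih =>
        have hm : (n + 1) * (m + 1) = (n + 1) * m + (n + 1) := by ring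
        rw [hm, prefixCat_add, hblock, ih, ← hL3]
        rfl
    refine ⟨g, hg, flattenWords_congr ?_ ?_⟩
    · intro m
      refine ⟨(n + 1) * m, ?_⟩
      rw [hpre m]
    · intro k
      refine ⟨k, ?_⟩
      rw [← hpre k]
      exact prefixCat_le (Nat.le_mul_of_pos_left k (Nat.succ_pos n))
  · rintro ⟨f, hf, rfl⟩
    set F : ℕ → List σ := fun m => ((List.range (n + 1)).map fun j => f ((n + 1) * m + j)).flatten
      with hFdef
    have hF : ∀ m, F m ∈ powL A n := by
      intro m
      refine flatten_mem_powL n _ (by simp) ?_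
      intro u hu
      simp only [List.mem_map, List.mem_range] at hu
      obtain ⟨j, -, rfl⟩ := hu
      exact hf _
    have hpre : ∀ m, prefixCat F m = prefixCat f ((n + 1) * m) := by
      intro m
      induction m with
      | zero => rw [Nat.mul_zero]; rfl
      | succ m ih =>
        have hm : (n + 1) * (m + 1) = (n + 1) * m + (n + 1) := by ring
        show prefixCat F m ++ F m = _
        rw [ih, hm, prefixCat_add]
    refine ⟨F, hF, flattenWords_congr ?_ ?_⟩
    · intro m
      refine ⟨m, ?_⟩
      rw [hpre m]
      exact prefixCat_le (Nat.le_mul_of_pos_left m (Nat.succ_pos n))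
    · intro k
      refine ⟨(n + 1) * k, ?_⟩
      rw [hpre k]

theorem αf_powL {Mf Mo : Type*} [SemilatticeSup Mf] [SemilatticeSup Mo]
    [Finite Mf] [Finite Mo] (B : BuchiAbstraction σ Mf Mo) (A : Set (List σ)) (n : ℕ) :
    B.αf (powL A n) = B.toBuchiAlgebra.pow (B.αf A) n := by
  induction n with
  | zero => rfl
  | succ n ih =>
    show B.αf (lcatF A (powL A n)) = B.cat (B.αf A) (B.toBuchiAlgebra.pow (B.αf A) n)
    rw [B.αf_cat, ih]

end Aux

/-- Every Büchi abstraction is a Wilke algebra: `𝒜·(ℬ·𝒜)^ω = (𝒜·ℬ)^ω` and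
`(𝒜ⁿ)^ω = 𝒜^ω` for every `n > 0` (here `B.pow a n = aⁿ⁺¹`). -/
theorem buchiAbstraction_wilke {σ : Type} [Inhabited σ] {Mf Mo : Type*}
    [SemilatticeSup Mf] [SemilatticeSup Mo] [Finite Mf] [Finite Mo]
    (B : BuchiAbstraction σ Mf Mo) :
    (∀ a b : Mf, B.act a (B.omega (B.cat b a)) = B.omega (B.cat a b)) ∧
    (∀ (a : Mf) (n : ℕ), B.omega (B.toBuchiAlgebra.pow a n) = B.omega a) := by
  constructor
  · intro a b
    have ha := B.gif.l_u_eq a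
    have hb := B.gif.l_u_eq b
    conv_lhs => rw [← ha, ← hb]
    rw [← B.αf_cat, ← B.αo_omega, ← B.αo_cat, lcat_omegaPow_eq, B.αo_omega, B.αf_cat, ha, hb]
  · intro a n
    have ha := B.gif.l_u_eq a
    conv_lhs => rw [← ha]
    rw [← αf_powL, ← B.αo_omega, omegaPow_powL, B.αo_omega, ha]
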